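/- Suppose N: [0,∞) → [0,∞) is nondecreasing, satisfies N(r) ≤ C_R·r^{n+1} for all r > 0, and satisfies (n+2)·∫₀^∞ (1+r)^{-(n+3)}·N(λr) dr ≥ c·λ^{n+1} for all λ > 0, with constants c, C_R > 0. Then there is a constant c' > 0 (depending only on c, C_R, n) such that N(λ) ≥ c'·λ^{n+1} for all λ > 0. -/

import Mathlib

open MeasureTheory Set Real

lemma shift_pre (b : ℝ) : (fun x : ℝ => x + 1) ⁻¹' Set.Ioi (b + 1) = Set.Ioi b := by
  ext x; simp

lemma aux_integrable {s : ℝ} (hs : s < -1) {b : ℝ} (hb : 0 ≤ b) :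
    IntegrableOn (fun r : ℝ => (1 + r) ^ s) (Set.Ioi b) := by
  have h1 : IntegrableOn (fun t : ℝ => t ^ s) (Set.Ioi (b + 1)) :=
    integrableOn_Ioi_rpow_of_lt hs (by linarith)
  have := ((measurePreserving_add_right (volume : Measure ℝ) 1).integrableOn_comp_preimage
    (MeasurableEquiv.addRight (1:ℝ)).measurableEmbedding).2 h1
  rw [shift_pre] at this
  simpa [Function.comp_def, add_comm] using this

lemma aux_integral {s : ℝ} (hs : s < -1) {b : ℝ} (hb : 0 ≤ b) :
    ∫ r in Set.Ioi b, (1 + r) ^ s = -(1 + b) ^ (s + 1) / (s + 1) := by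
  have h1 : ∫ t in Set.Ioi (b + 1), t ^ s = -(b+1) ^ (s + 1) / (s + 1) :=
    integral_Ioi_rpow_of_lt hs (by linarith)
  have := (measurePreserving_add_right (volume : Measure ℝ) 1).setIntegral_preimage_emb
    (MeasurableEquiv.addRight (1:ℝ)).measurableEmbedding (fun t => t ^ s) (Set.Ioi (b+1))
  rw [shift_pre, h1] at this
  rw [show (1:ℝ) + b = b + 1 by ring, ← this]
  exact setIntegral_congr_fun measurableSet_Ioi (fun x _ => by rw [add_comm])

/-- The Tauberian step in the resonance counting lower bound: if N is
nondecreasing, nonnegative, bounded above by C_R r^{n+1}, and satisfies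
(n+2) ∫₀^∞ (1+r)^{-(n+3)} N(λr) dr ≥ c λ^{n+1}, then N(λ) ≥ c' λ^{n+1}. -/
theorem tauberian_lower_bound (n : ℕ) (N : ℝ → ℝ) (c CR : ℝ)
    (hc : 0 < c) (hCR : 0 < CR) (hmono : Monotone N) (hpos : ∀ r, 0 ≤ N r)
    (hub : ∀ r : ℝ, 0 < r → N r ≤ CR * r^(n+1))
    (hlb : ∀ l : ℝ, 0 < l →
      c * l^(n+1) ≤ (n+2 : ℝ) * ∫ r in Set.Ioi (0:ℝ), N (l * r) / (1 + r)^(n+3)) :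
    ∃ c' > 0, ∀ l : ℝ, 0 < l → c' * l^(n+1) ≤ N l := by
  set a : ℝ := 2 * (n + 2) * CR / c with ha_def
  have ha : 0 < a := by positivity
  have hs1 : (-(n + 3 : ℝ)) < -1 := by
    have : (0:ℝ) ≤ n := Nat.cast_nonneg n
    linarith
  have hs2 : (-2 : ℝ) < -1 := by norm_num
  have key : ∀ l : ℝ, 0 < l → c / 2 * l ^ (n + 1) ≤ N (l * a) := by
    intro l hl
    set K := N (l * a) with hK
    have hK0 : 0 ≤ K := hpos _
    set M := CR * l ^ (n + 1) with hM
    have hM0 : 0 ≤ M := by positivity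
    set g : ℝ → ℝ := fun r =>
      K * (1 + r) ^ (-(n + 3 : ℝ)) + Set.indicator (Set.Ioi a)
        (fun r => M * (1 + r) ^ (-2 : ℝ)) r with hg_def
    have hg1 : IntegrableOn (fun r : ℝ => K * (1 + r) ^ (-(n + 3 : ℝ))) (Set.Ioi 0) :=
      (aux_integrable hs1 le_rfl).const_mul K
    have hg2 : Integrable (Set.indicator (Set.Ioi a)
        (fun r : ℝ => M * (1 + r) ^ (-2 : ℝ))) :=
      (integrable_indicator_iff measurableSet_Ioi).2
        ((aux_integrable hs2 ha.le).const_mul M)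
    have hgint : IntegrableOn g (Set.Ioi 0) := hg1.add hg2.integrableOn
    -- pointwise bound
    have hbound : ∀ᵐ r ∂(volume.restrict (Set.Ioi (0:ℝ))),
        N (l * r) / (1 + r) ^ (n + 3) ≤ g r := by
      filter_upwards [ae_restrict_mem measurableSet_Ioi] with r hr
      have hr0 : 0 < r := hr
      have h1r : (0:ℝ) < 1 + r := by linarith
      have hpow3 : ((1 + r):ℝ) ^ ((n:ℝ) + 3) = (1 + r) ^ (n + 3) := by
        rw [show ((n:ℝ) + 3) = ((n + 3 : ℕ) : ℝ) by push_cast; ring, Real.rpow_natCast]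
      have hpow1 : ((1 + r):ℝ) ^ ((n:ℝ) + 1) = (1 + r) ^ (n + 1) := by
        rw [show ((n:ℝ) + 1) = ((n + 1 : ℕ) : ℝ) by push_cast; ring, Real.rpow_natCast]
      have hppos : (0:ℝ) < (1 + r) ^ (n + 3) := by positivity
      rcases le_or_gt r a with hra | hra
      · -- r ≤ a : use monotonicity
        have h1 : N (l * r) ≤ K := hmono (by nlinarith)
        have h2 : N (l * r) / (1 + r) ^ (n + 3) ≤ K * (1 + r) ^ (-(n + 3 : ℝ)) := by
          have e : K * (1 + r) ^ (-(n + 3 : ℝ)) = K / (1 + r) ^ (n + 3) := by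
            rw [Real.rpow_neg h1r.le, hpow3, div_eq_mul_inv]
          rw [e, div_le_div_iff₀ hppos hppos]
          nlinarith
        have h3 : 0 ≤ Set.indicator (Set.Ioi a)
            (fun r => M * (1 + r) ^ (-2 : ℝ)) r := by
          apply Set.indicator_nonneg
          intro x hx
          have : (0:ℝ) < 1 + x := by have := Set.mem_Ioi.mp hx; linarith
          positivity
        simpa [hg_def] using h2.trans (le_add_of_nonneg_right h3)
      · -- a < r : use upper bound
        have h1 : N (l * r) ≤ M * (1 + r) ^ (n + 1) := by
          have hu := hub (l * r) (by positivity)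
          have h2 : (l * r) ^ (n + 1) ≤ l ^ (n + 1) * (1 + r) ^ (n + 1) := by
            rw [mul_pow]
            exact mul_le_mul_of_nonneg_left
              (pow_le_pow_left₀ hr0.le (by linarith) _) (by positivity)
          calc N (l * r) ≤ CR * (l * r) ^ (n + 1) := hu
            _ ≤ CR * (l ^ (n + 1) * (1 + r) ^ (n + 1)) :=
                mul_le_mul_of_nonneg_left h2 hCR.le
            _ = M * (1 + r) ^ (n + 1) := by rw [hM]; ring
        have h2 : N (l * r) / (1 + r) ^ (n + 3) ≤ M * (1 + r) ^ (-2 : ℝ) := by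
          rw [div_le_iff₀ hppos]
          have e2 : ((1 + r):ℝ) ^ (-2 : ℝ) * (1 + r) ^ (n + 3) = (1 + r) ^ (n + 1) := by
            rw [← hpow3, ← hpow1, ← Real.rpow_add h1r]
            congr 1
            ring
          calc N (l * r) ≤ M * (1 + r) ^ (n + 1) := h1
            _ = M * ((1 + r) ^ (-2 : ℝ) * (1 + r) ^ (n + 3)) := by rw [e2]
            _ = M * (1 + r) ^ (-2 : ℝ) * (1 + r) ^ (n + 3) := by ring
        have h3 : Set.indicator (Set.Ioi a)
            (fun r => M * (1 + r) ^ (-2 : ℝ)) r = M * (1 + r) ^ (-2 : ℝ) :=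
          Set.indicator_of_mem hra _
        have h4 : 0 ≤ K * (1 + r) ^ (-(n + 3 : ℝ)) := by positivity
        simp only [hg_def, h3]
        linarith
    have hnn : 0 ≤ᵐ[volume.restrict (Set.Ioi (0:ℝ))]
        fun r => N (l * r) / (1 + r) ^ (n + 3) := by
      filter_upwards [ae_restrict_mem measurableSet_Ioi] with r hr
      have h1r : (0:ℝ) < 1 + r := by simp only [Set.mem_Ioi] at hr; linarith
      have := hpos (l * r)
      positivity
    have hIle : ∫ r in Set.Ioi (0:ℝ), N (l * r) / (1 + r) ^ (n + 3)
        ≤ ∫ r in Set.Ioi (0:ℝ), g r :=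
      integral_mono_of_nonneg hnn hgint hbound
    -- compute ∫ g
    have hn2 : (0:ℝ) < (n:ℝ) + 2 := by positivity
    have hInt1 : ∫ r in Set.Ioi (0:ℝ), (1 + r) ^ (-(n + 3 : ℝ)) = 1 / ((n:ℝ) + 2) := by
      rw [aux_integral hs1 le_rfl,
        show (-(n + 3 : ℝ) + 1) = -((n:ℝ) + 2) by ring,
        show ((1:ℝ) + 0) = 1 by norm_num, Real.one_rpow, neg_div_neg_eq]
    have hInt2 : ∫ r in Set.Ioi a, (1 + r) ^ (-2 : ℝ) = (1 + a)⁻¹ := by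
      rw [aux_integral hs2 ha.le]
      norm_num [Real.rpow_neg_one]
    have hIg : ∫ r in Set.Ioi (0:ℝ), g r = K / ((n:ℝ) + 2) + M * (1 + a)⁻¹ := by
      rw [hg_def, integral_add hg1 hg2.integrableOn, integral_const_mul, hInt1,
        setIntegral_indicator measurableSet_Ioi,
        show (Set.Ioi (0:ℝ)) ∩ Set.Ioi a = Set.Ioi a by
          rw [Set.Ioi_inter_Ioi]; simp [max_eq_right ha.le],
        integral_const_mul, hInt2]
      ring
    have hmain := hlb l hl
    have h1a : (0:ℝ) < 1 + a := by linarith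
    have hfin : c * l ^ (n + 1) ≤ K + ((n:ℝ) + 2) * M * (1 + a)⁻¹ := by
      calc c * l ^ (n + 1)
          ≤ (n + 2 : ℝ) * ∫ r in Set.Ioi (0:ℝ), N (l * r) / (1 + r) ^ (n + 3) := hmain
        _ ≤ (n + 2 : ℝ) * ∫ r in Set.Ioi (0:ℝ), g r :=
            mul_le_mul_of_nonneg_left hIle (by positivity)
        _ = K + ((n:ℝ) + 2) * M * (1 + a)⁻¹ := by
            rw [hIg]; field_simp
    have htail : ((n:ℝ) + 2) * M * (1 + a)⁻¹ ≤ c / 2 * l ^ (n + 1) := by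
      have hle : (1 + a)⁻¹ ≤ a⁻¹ := by
        apply inv_anti₀ ha (by linarith)
      have heq : ((n:ℝ) + 2) * M * a⁻¹ = c / 2 * l ^ (n + 1) := by
        rw [hM, ha_def]
        field_simp
      calc ((n:ℝ) + 2) * M * (1 + a)⁻¹ ≤ ((n:ℝ) + 2) * M * a⁻¹ :=
            mul_le_mul_of_nonneg_left hle (by positivity)
        _ = c / 2 * l ^ (n + 1) := heq
    linarith
  clear_value a
  clear ha_def
  refine ⟨c / (2 * a ^ (n + 1)), by positivity, fun l hl => ?_⟩
  have hane : a ^ (n + 1) ≠ 0 := by positivity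
  have hk := key (l / a) (by positivity)
  rw [div_mul_cancel₀ l ha.ne'] at hk
  calc c / (2 * a ^ (n + 1)) * l ^ (n + 1) = c / 2 * (l / a) ^ (n + 1) := by
        rw [div_pow]; field_simp
    _ ≤ N l := hk
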